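/- arXiv:2604.20045 — 4 statements merged into one kernel-verified Lean document; each statement's English description precedes it below -/
import Mathlib

section
/- Suppose Ψ : ℝ × 𝒱 → ℝ is measurable and there exist constants B, K with |Ψ(t,v)| ≤ B and |Ψ(t,v) − Ψ(0,v)| ≤ K·|t| for all (t,v); suppose D : 𝒪 → ℝ is bounded measurable with E_{P₀}[D | 𝒢] = 0 P₀-almost surely; and suppose there is a measurable φ : 𝒱 → ℝ such that φ∘V is a version of the conditional expectation E_{P₀}[ D·(s − E_{P₀}[s | 𝒢]) | 𝒢 ] and, for (P₀∘V⁻¹)-almost every v, the map t ↦ Ψ(t,v) is differentiable at t = 0 with derivative φ(v). Define Ω(t) := ∫ Ψ(t, V(o)) · ( h(V(o)) − ∫ h(V) dP_t ) dP_t(o). Then t ↦ Ω(t) is differentiable at t = 0 and Ω′(0) = ∫ D*(o)·s(o) dP₀(o), where D*(o) := ( D(o) − ∫ Ψ(0, V) dP₀ + Ψ(0, V(o)) ) · ( h(V(o)) − ∫ h(V) dP₀ ) − Ω(0). -/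
open MeasureTheory Metric

lemma aux_hasDerivAt_integral {α : Type*} [MeasurableSpace α] {μ : Measure α}
    {F : ℝ → α → ℝ} {F' : α → ℝ} {x₀ : ℝ} {bound : α → ℝ} {ε : ℝ} (ε_pos : 0 < ε)
    (hF_meas : ∀ x ∈ ball x₀ ε, AEStronglyMeasurable (F x) μ)
    (hF_int : Integrable (F x₀) μ)
    (hF'_meas : AEStronglyMeasurable F' μ)
    (h_lip : ∀ᵐ a ∂μ, ∀ x ∈ ball x₀ ε, ‖F x a - F x₀ a‖ ≤ bound a * ‖x - x₀‖)
    (bound_integrable : Integrable bound μ)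
    (h_diff : ∀ᵐ a ∂μ, HasDerivAt (F · a) (F' a) x₀) :
    HasDerivAt (fun x => ∫ a, F x a ∂μ) (∫ a, F' a ∂μ) x₀ := by
  set L : ℝ →L[ℝ] ℝ →L[ℝ] ℝ := ContinuousLinearMap.smulRightL ℝ ℝ ℝ 1
  replace h_diff : ∀ᵐ a ∂μ, HasFDerivAt (F · a) (L (F' a)) x₀ :=
    h_diff.mono fun x hx => hx.hasFDerivAt
  have hm : AEStronglyMeasurable (L ∘ F') μ := L.continuous.comp_aestronglyMeasurable hF'_meas
  obtain ⟨hF'_int, key⟩ := hasFDerivAt_integral_of_dominated_loc_of_lip' (ball_mem_nhds x₀ ε_pos) hF_meas hF_int hm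
    h_lip bound_integrable h_diff
  replace hF'_int : Integrable F' μ := by
    rw [← integrable_norm_iff hm] at hF'_int
    simpa only [L, Function.comp_def, integrable_norm_iff, hF'_meas, one_mul, norm_one,
      ContinuousLinearMap.comp_apply, ContinuousLinearMap.coe_restrict_scalarsL',
      ContinuousLinearMap.norm_restrictScalars, show ∀ y : ℝ, ‖(ContinuousLinearMap.smulRightL ℝ ℝ ℝ 1) y‖ = ‖y‖ from fun y =>
        (ContinuousLinearMap.norm_smulRight_apply (1 : ℝ →L[ℝ] ℝ) y).trans (by simp)] using
      hF'_int
  simp_rw [hasDerivAt_iff_hasFDerivAt]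
  simp only [Function.comp_def, ContinuousLinearMap.integral_comp_comm _ hF'_int] at key
  exact key


/-- Pathwise differentiability of `Ω_{P_t}(h) = ∫ Ψ_{t}(V)·(h(V) − ∫ h(V) dP_t) dP_t`
along the tilted path `dP_t = (1 + t·s) dP₀`, with efficient influence function
`D*(o) = (D(o) − ∫Ψ(0,V)dP₀ + Ψ(0,V(o)))·(h(V(o)) − ∫h(V)dP₀) − Ω(0)`.
Here `𝒢` is the σ-algebra generated by the projection `V = Prod.snd`. -/
theorem stmt1
    {𝒰 𝒱 : Type*} [MeasurableSpace 𝒰] [MeasurableSpace 𝒱]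
    (P₀ : Measure (𝒰 × 𝒱)) [IsProbabilityMeasure P₀]
    -- the direction `s`: bounded, measurable, mean zero
    (s : 𝒰 × 𝒱 → ℝ) (hs_meas : Measurable s) (S : ℝ) (hs_bdd : ∀ o, |s o| ≤ S)
    (hs_mean : ∫ o, s o ∂P₀ = 0)
    -- the tilted path `P t`
    (P : ℝ → Measure (𝒰 × 𝒱))
    (hP : ∀ t, P t = P₀.withDensity (fun o => ENNReal.ofReal (1 + t * s o)))
    -- the function `h` in the dual class: bounded and measurable
    (h : 𝒱 → ℝ) (hh_meas : Measurable h) (Ch : ℝ) (hh_bdd : ∀ v, |h v| ≤ Ch)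
    -- the function-valued parameter `Ψ (t, v) = Ψ_{t,v}`: measurable, bounded, Lipschitz in `t`
    (Ψ : ℝ × 𝒱 → ℝ) (hΨ_meas : Measurable Ψ)
    (B K : ℝ) (hΨ_bdd : ∀ t v, |Ψ (t, v)| ≤ B)
    (hΨ_lip : ∀ t v, |Ψ (t, v) - Ψ (0, v)| ≤ K * |t|)
    -- the conditional influence function `D`: bounded, measurable, conditionally mean zero
    (D : 𝒰 × 𝒱 → ℝ) (hD_meas : Measurable D) (CD : ℝ) (hD_bdd : ∀ o, |D o| ≤ CD)
    (hD_cond : P₀[D | MeasurableSpace.comap (Prod.snd : 𝒰 × 𝒱 → 𝒱) inferInstance]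
      =ᵐ[P₀] 0)
    -- `φ ∘ V` is a version of `E[D·(s − E[s|𝒢]) | 𝒢]`, and `t ↦ Ψ(t,v)` has derivative `φ v` at 0
    (φ : 𝒱 → ℝ) (hφ_meas : Measurable φ)
    (hφ_ver : (fun o => φ o.2)
      =ᵐ[P₀] P₀[fun o => D o *
          (s o - (P₀[s | MeasurableSpace.comap (Prod.snd : 𝒰 × 𝒱 → 𝒱) inferInstance]) o)
        | MeasurableSpace.comap (Prod.snd : 𝒰 × 𝒱 → 𝒱) inferInstance])
    (hφ_deriv : ∀ᵐ v ∂(P₀.map Prod.snd), HasDerivAt (fun t => Ψ (t, v)) (φ v) 0)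
    -- the functional `Ω` along the path
    (Ω : ℝ → ℝ)
    (hΩ : ∀ t, Ω t = ∫ o, Ψ (t, o.2) * (h o.2 - ∫ o', h o'.2 ∂(P t)) ∂(P t))
    -- the efficient influence function `D*`
    (Dstar : 𝒰 × 𝒱 → ℝ)
    (hDstar : ∀ o, Dstar o =
      (D o - (∫ o', Ψ (0, o'.2) ∂P₀) + Ψ (0, o.2)) * (h o.2 - ∫ o', h o'.2 ∂P₀) - Ω 0) :
    HasDerivAt Ω (∫ o, Dstar o * s o ∂P₀) 0 := by
  classical
  -- nonemptiness and nonnegativity of the bounds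
  have hne : Nonempty (𝒰 × 𝒱) := by
    by_contra hc
    have h1 := measure_univ (μ := P₀)
    rw [Set.univ_eq_empty_iff.2 (not_nonempty_iff.1 hc), measure_empty] at h1
    exact zero_ne_one h1
  obtain ⟨o₀⟩ := hne
  have hS0 : 0 ≤ S := le_trans (abs_nonneg _) (hs_bdd o₀)
  have hCh0 : 0 ≤ Ch := le_trans (abs_nonneg _) (hh_bdd o₀.2)
  have hB0 : 0 ≤ B := le_trans (abs_nonneg _) (hΨ_bdd 0 o₀.2)
  -- the σ-algebra 𝒢
  have h𝒢le : MeasurableSpace.comap (Prod.snd : 𝒰 × 𝒱 → 𝒱) inferInstance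
      ≤ (inferInstance : MeasurableSpace (𝒰 × 𝒱)) := measurable_snd.comap_le
  have hsnd𝒢 : @Measurable _ _ (MeasurableSpace.comap (Prod.snd : 𝒰 × 𝒱 → 𝒱) inferInstance) _
    (Prod.snd : 𝒰 × 𝒱 → 𝒱) := fun t ht => ⟨t, ht, rfl⟩
  -- integrability of bounded measurable functions
  have intBdd : ∀ (f : 𝒰 × 𝒱 → ℝ) (C : ℝ), Measurable f → (∀ o, |f o| ≤ C) →
      Integrable f P₀ := by
    intro f C hf hC
    refine ⟨hf.aestronglyMeasurable, ?_⟩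
    exact HasFiniteIntegral.of_bounded (C := C)
      (Filter.Eventually.of_forall fun o => by simpa [Real.norm_eq_abs] using hC o)
  -- basic measurable pieces
  have hhV : Measurable fun o : 𝒰 × 𝒱 => h o.2 := hh_meas.comp measurable_snd
  have hΨt : ∀ t, Measurable fun o : 𝒰 × 𝒱 => Ψ (t, o.2) := fun t =>
    hΨ_meas.comp (measurable_const.prodMk measurable_snd)
  -- constants
  set H₀ : ℝ := ∫ o', h o'.2 ∂P₀ with hH₀
  set c : ℝ := ∫ o, h o.2 * s o ∂P₀ with hc
  set B₀ : ℝ := ∫ o', Ψ (0, o'.2) ∂P₀ with hB₀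
  set M : ℝ := Ch + |H₀| + |c| with hM
  have hM0 : 0 ≤ M := by rw [hM]; have := abs_nonneg H₀; have := abs_nonneg c; linarith
  set δ : ℝ := (S + 1)⁻¹ with hδ
  have hδpos : 0 < δ := by rw [hδ]; exact inv_pos.2 (by linarith)
  have hδ1 : δ ≤ 1 := by
    rw [hδ]
    rw [inv_le_one_iff₀]
    right; linarith
  have hposball : ∀ t ∈ ball (0:ℝ) δ, ∀ o, 0 ≤ 1 + t * s o := by
    intro t ht o
    have htabs : |t| < δ := by simpa [Real.dist_eq] using ht
    have h1 : |t * s o| ≤ δ * S := by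
      rw [abs_mul]
      exact mul_le_mul htabs.le (hs_bdd o) (abs_nonneg _) hδpos.le
    have h2 : δ * S ≤ 1 := by
      rw [hδ, inv_mul_le_iff₀ (by linarith)]; linarith
    have := (abs_le.1 (h1.trans h2)).1
    linarith
  -- integral along the path in terms of P₀
  have hint : ∀ t, (∀ o, 0 ≤ 1 + t * s o) → ∀ (f : 𝒰 × 𝒱 → ℝ),
      ∫ o, f o ∂(P t) = ∫ o, (1 + t * s o) * f o ∂P₀ := by
    intro t ht f
    rw [hP t]
    have hmeas : Measurable fun o => (1 + t * s o).toNNReal :=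
      (measurable_const.add (hs_meas.const_mul t)).real_toNNReal
    have he : (fun o => ENNReal.ofReal (1 + t * s o))
        = (fun o => ((1 + t * s o).toNNReal : ENNReal)) := rfl
    rw [he, integral_withDensity_eq_integral_smul hmeas]
    refine integral_congr_ae (Filter.Eventually.of_forall fun o => ?_)
    simp [NNReal.smul_def, Real.coe_toNNReal _ (ht o)]
  -- the mean of h along the path
  have hintc : Integrable (fun o => h o.2 * s o) P₀ :=
    intBdd _ (Ch * S) (hhV.mul hs_meas) fun o => by
      rw [abs_mul]
      exact mul_le_mul (hh_bdd o.2) (hs_bdd o) (abs_nonneg _) hCh0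
  have hinth : Integrable (fun o : 𝒰 × 𝒱 => h o.2) P₀ := intBdd _ Ch hhV fun o => hh_bdd o.2
  have hH : ∀ t, (∀ o, 0 ≤ 1 + t * s o) → ∫ o', h o'.2 ∂(P t) = H₀ + t * c := by
    intro t ht
    rw [hint t ht]
    have e : (fun o => (1 + t * s o) * h o.2)
        = fun o => h o.2 + t * (h o.2 * s o) := funext fun o => by ring
    rw [e, integral_add hinth (hintc.const_mul t), integral_const_mul]
  -- the parametrized integrand and its derivative
  set F : ℝ → 𝒰 × 𝒱 → ℝ :=
    fun t o => Ψ (t, o.2) * (h o.2 - (H₀ + t * c)) * (1 + t * s o) with hF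
  set F' : 𝒰 × 𝒱 → ℝ := fun o =>
    φ o.2 * (h o.2 - H₀) + Ψ (0, o.2) * (-c) + Ψ (0, o.2) * ((h o.2 - H₀) * s o) with hF'def
  have hFmeas : ∀ t, Measurable (F t) := fun t =>
    (((hΨt t).mul ((hhV.sub measurable_const))).mul (measurable_const.add (hs_meas.const_mul t)))
  have hF0int : Integrable (F 0) P₀ := by
    refine intBdd _ (B * M * (1 + S)) (hFmeas 0) fun o => ?_
    rw [hF]
    simp only [abs_mul]
    have hw : |h o.2 - (H₀ + 0 * c)| ≤ M := by
      rw [hM]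
      have := hh_bdd o.2
      have h1 : |h o.2 - (H₀ + 0 * c)| ≤ |h o.2| + |H₀ + 0 * c| := abs_sub _ _
      have h2 : |H₀ + 0 * c| = |H₀| := by norm_num
      have := abs_nonneg c
      linarith
    have hz : |1 + 0 * s o| ≤ 1 + S := by
      rw [zero_mul, add_zero, abs_one]; linarith
    exact mul_le_mul (mul_le_mul (hΨ_bdd 0 o.2) hw (abs_nonneg _) hB0) hz (abs_nonneg _)
      (mul_nonneg hB0 hM0)
  -- the Lipschitz estimate on the ball
  set Lb : ℝ := K * M * (1 + S) + B * |c| * (1 + S) + B * M * S with hLb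
  have hlip : ∀ᵐ o ∂P₀, ∀ t ∈ ball (0:ℝ) δ, ‖F t o - F 0 o‖ ≤ Lb * ‖t - 0‖ := by
    refine Filter.Eventually.of_forall fun o => fun t ht => ?_
    have htabs : |t| < δ := by simpa [Real.dist_eq] using ht
    have ht1 : |t| ≤ 1 := le_trans htabs.le hδ1
    have hwt : |h o.2 - (H₀ + t * c)| ≤ M := by
      rw [hM]
      have h1 : |h o.2 - (H₀ + t * c)| ≤ |h o.2| + |H₀ + t * c| := abs_sub _ _
      have h2 : |H₀ + t * c| ≤ |H₀| + |t| * |c| := by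
        calc |H₀ + t * c| ≤ |H₀| + |t * c| := abs_add_le _ _
        _ = |H₀| + |t| * |c| := by rw [abs_mul]
      have h3 : |t| * |c| ≤ |c| := by
        nlinarith [abs_nonneg c, abs_nonneg t]
      have := hh_bdd o.2
      linarith
    have hw0 : |h o.2 - (H₀ + 0 * c)| ≤ M := by
      rw [hM]
      have h1 : |h o.2 - (H₀ + 0 * c)| ≤ |h o.2| + |H₀ + 0 * c| := abs_sub _ _
      have h2 : |H₀ + 0 * c| = |H₀| := by norm_num
      have := hh_bdd o.2
      have := abs_nonneg c
      linarith
    have hzt : |1 + t * s o| ≤ 1 + S := by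
      have h1 : |1 + t * s o| ≤ 1 + |t * s o| := by
        calc |1 + t * s o| ≤ |1| + |t * s o| := abs_add_le _ _
        _ = 1 + |t * s o| := by rw [abs_one]
      have h2 : |t * s o| ≤ S := by
        rw [abs_mul]
        nlinarith [abs_nonneg (s o), hs_bdd o, abs_nonneg t]
      linarith
    have e : F t o - F 0 o =
        (Ψ (t, o.2) - Ψ (0, o.2)) * ((h o.2 - (H₀ + t * c)) * (1 + t * s o))
        + Ψ (0, o.2) * ((-(t * c)) * (1 + t * s o))
        + Ψ (0, o.2) * ((h o.2 - (H₀ + 0 * c)) * (t * s o)) := by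
      rw [hF]; ring
    rw [Real.norm_eq_abs, Real.norm_eq_abs, e, sub_zero]
    have b1 : |(Ψ (t, o.2) - Ψ (0, o.2)) * ((h o.2 - (H₀ + t * c)) * (1 + t * s o))|
        ≤ (K * |t|) * (M * (1 + S)) := by
      rw [abs_mul, abs_mul]
      have hK0 : 0 ≤ K * |t| := le_trans (abs_nonneg _) (hΨ_lip t o.2)
      exact mul_le_mul (hΨ_lip t o.2)
        (mul_le_mul hwt hzt (abs_nonneg _) hM0) (mul_nonneg (abs_nonneg _) (abs_nonneg _)) hK0
    have b2 : |Ψ (0, o.2) * ((-(t * c)) * (1 + t * s o))| ≤ B * ((|t| * |c|) * (1 + S)) := by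
      rw [abs_mul, abs_mul, abs_neg, abs_mul]
      exact mul_le_mul (hΨ_bdd 0 o.2)
        (mul_le_mul le_rfl hzt (abs_nonneg _) (mul_nonneg (abs_nonneg _) (abs_nonneg _)))
        (mul_nonneg (mul_nonneg (abs_nonneg _) (abs_nonneg _)) (abs_nonneg _)) hB0
    have b3 : |Ψ (0, o.2) * ((h o.2 - (H₀ + 0 * c)) * (t * s o))|
        ≤ B * (M * (|t| * S)) := by
      rw [abs_mul, abs_mul, abs_mul]
      have hts : |t| * |s o| ≤ |t| * S := by
        nlinarith [abs_nonneg t, hs_bdd o]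
      exact mul_le_mul (hΨ_bdd 0 o.2)
        (mul_le_mul hw0 hts (mul_nonneg (abs_nonneg _) (abs_nonneg _)) hM0)
        (mul_nonneg (abs_nonneg _) (mul_nonneg (abs_nonneg _) (abs_nonneg _))) hB0
    calc |(Ψ (t, o.2) - Ψ (0, o.2)) * ((h o.2 - (H₀ + t * c)) * (1 + t * s o))
        + Ψ (0, o.2) * ((-(t * c)) * (1 + t * s o))
        + Ψ (0, o.2) * ((h o.2 - (H₀ + 0 * c)) * (t * s o))|
        ≤ |(Ψ (t, o.2) - Ψ (0, o.2)) * ((h o.2 - (H₀ + t * c)) * (1 + t * s o))|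
          + |Ψ (0, o.2) * ((-(t * c)) * (1 + t * s o))|
          + |Ψ (0, o.2) * ((h o.2 - (H₀ + 0 * c)) * (t * s o))| := abs_add_three _ _ _
      _ ≤ (K * |t|) * (M * (1 + S)) + B * ((|t| * |c|) * (1 + S)) + B * (M * (|t| * S)) := by
          linarith
      _ = Lb * |t| := by rw [hLb]; ring
  -- a.e. differentiability of the integrand at 0
  have hderiv_ae : ∀ᵐ o ∂P₀, HasDerivAt (fun t => Ψ (t, o.2)) (φ o.2) 0 :=
    ae_of_ae_map measurable_snd.aemeasurable hφ_deriv
  have hdiff : ∀ᵐ o ∂P₀, HasDerivAt (F · o) (F' o) 0 := by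
    filter_upwards [hderiv_ae] with o ho
    have hw : HasDerivAt (fun t : ℝ => h o.2 - (H₀ + t * c)) (-c) 0 := by
      simpa using (((hasDerivAt_id (0:ℝ)).mul_const c).const_add H₀).const_sub (h o.2)
    have hz : HasDerivAt (fun t : ℝ => 1 + t * s o) (s o) 0 := by
      simpa using ((hasDerivAt_id (0:ℝ)).mul_const (s o)).const_add 1
    have := (ho.mul hw).mul hz
    refine HasDerivAt.congr_deriv this ?_
    rw [hF'def]
    simp only [Pi.mul_apply]
    ring
  -- apply dominated differentiation
  have hF'meas : AEStronglyMeasurable F' P₀ := by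
    rw [hF'def]
    have m1 : Measurable fun o : 𝒰 × 𝒱 => φ o.2 * (h o.2 - H₀) :=
      (hφ_meas.comp measurable_snd).mul (hhV.sub measurable_const)
    have m2 : Measurable fun o : 𝒰 × 𝒱 => Ψ (0, o.2) * (-c) := (hΨt 0).mul_const (-c)
    have m3 : Measurable fun o : 𝒰 × 𝒱 => Ψ (0, o.2) * ((h o.2 - H₀) * s o) :=
      (hΨt 0).mul ((hhV.sub measurable_const).mul hs_meas)
    exact ((m1.add m2).add m3).aestronglyMeasurable
  have main := aux_hasDerivAt_integral (μ := P₀) (F := F) (F' := F') (bound := fun _ => Lb)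
    hδpos (fun t _ => (hFmeas t).aestronglyMeasurable) hF0int hF'meas
    hlip (integrable_const Lb) hdiff
  -- Ω agrees with t ↦ ∫ F t near 0
  have hΩeq : Ω =ᶠ[nhds (0:ℝ)] fun t => ∫ o, F t o ∂P₀ := by
    filter_upwards [ball_mem_nhds (0:ℝ) hδpos] with t ht
    have hpos := hposball t ht
    rw [hΩ t, hH t hpos, hint t hpos]
    refine integral_congr_ae (Filter.Eventually.of_forall fun o => ?_)
    rw [hF]; ring
  -- conditional-expectation computation of the derivative value
  set Z : 𝒰 × 𝒱 → ℝ := fun o => h o.2 - H₀ with hZ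
  have hZmeas : Measurable Z := hhV.sub measurable_const
  have hZbdd : ∀ o, |Z o| ≤ Ch + |H₀| := fun o => by
    have h1 : |Z o| ≤ |h o.2| + |H₀| := abs_sub _ _
    have := hh_bdd o.2
    linarith
  have hZsm : StronglyMeasurable[(MeasurableSpace.comap (Prod.snd : 𝒰 × 𝒱 → 𝒱) inferInstance)] Z :=
    ((hh_meas.comp hsnd𝒢).sub (@measurable_const _ _ _ (MeasurableSpace.comap (Prod.snd : 𝒰 × 𝒱 → 𝒱) inferInstance) _)).stronglyMeasurable
  have hs_int : Integrable s P₀ := intBdd _ S hs_meas hs_bdd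
  set Y : 𝒰 × 𝒱 → ℝ := fun o => D o * (s o - (P₀[s | (MeasurableSpace.comap (Prod.snd : 𝒰 × 𝒱 → 𝒱) inferInstance)]) o) with hY
  have hY_int : Integrable Y P₀ := by
    refine Integrable.bdd_mul (hs_int.sub integrable_condExp) hD_meas.aestronglyMeasurable
      (c := CD) (Filter.Eventually.of_forall fun o => by simpa [Real.norm_eq_abs] using hD_bdd o)
  have hZY_int : Integrable (Z * Y) P₀ := by
    refine Integrable.bdd_mul hY_int hZmeas.aestronglyMeasurable
      (c := Ch + |H₀|) (Filter.Eventually.of_forall fun o => by simpa [Real.norm_eq_abs] using hZbdd o)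
  have key : ∫ o, φ o.2 * Z o ∂P₀ = ∫ o, Z o * (D o * s o) ∂P₀ := by
    have e1 : ∫ o, φ o.2 * Z o ∂P₀ = ∫ o, Z o * (P₀[Y | (MeasurableSpace.comap (Prod.snd : 𝒰 × 𝒱 → 𝒱) inferInstance)]) o ∂P₀ := by
      refine integral_congr_ae ?_
      filter_upwards [hφ_ver] with o ho
      rw [ho, mul_comm]
    have e2 : ∫ o, Z o * (P₀[Y | (MeasurableSpace.comap (Prod.snd : 𝒰 × 𝒱 → 𝒱) inferInstance)]) o ∂P₀ = ∫ o, (P₀[Z * Y | (MeasurableSpace.comap (Prod.snd : 𝒰 × 𝒱 → 𝒱) inferInstance)]) o ∂P₀ := by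
      refine (integral_congr_ae ?_).symm
      filter_upwards [condExp_mul_of_stronglyMeasurable_left hZsm hZY_int hY_int] with o ho
      simpa using ho
    have e3 : ∫ o, (P₀[Z * Y | (MeasurableSpace.comap (Prod.snd : 𝒰 × 𝒱 → 𝒱) inferInstance)]) o ∂P₀ = ∫ o, Z o * Y o ∂P₀ := integral_condExp h𝒢le
    -- now expand Y
    set W : 𝒰 × 𝒱 → ℝ := fun o => Z o * (P₀[s | (MeasurableSpace.comap (Prod.snd : 𝒰 × 𝒱 → 𝒱) inferInstance)]) o with hW
    have hWsm : StronglyMeasurable[(MeasurableSpace.comap (Prod.snd : 𝒰 × 𝒱 → 𝒱) inferInstance)] W := hZsm.mul stronglyMeasurable_condExp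
    have hW_int : Integrable W P₀ := by
      refine Integrable.bdd_mul integrable_condExp hZmeas.aestronglyMeasurable
        (c := Ch + |H₀|) (Filter.Eventually.of_forall fun o => by simpa [Real.norm_eq_abs] using hZbdd o)
    have hWD_int : Integrable (W * D) P₀ := by
      have : Integrable (fun o => D o * W o) P₀ :=
        Integrable.bdd_mul hW_int hD_meas.aestronglyMeasurable
          (c := CD) (Filter.Eventually.of_forall fun o => by simpa [Real.norm_eq_abs] using hD_bdd o)
      exact this.congr (Filter.Eventually.of_forall fun o => by simp [mul_comm])
    have hD_int : Integrable D P₀ := intBdd _ CD hD_meas hD_bdd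
    have hzero : ∫ o, W o * D o ∂P₀ = 0 := by
      have e4 : ∫ o, W o * D o ∂P₀ = ∫ o, (P₀[W * D | (MeasurableSpace.comap (Prod.snd : 𝒰 × 𝒱 → 𝒱) inferInstance)]) o ∂P₀ :=
        (integral_condExp h𝒢le).symm
      have e5 : ∫ o, (P₀[W * D | (MeasurableSpace.comap (Prod.snd : 𝒰 × 𝒱 → 𝒱) inferInstance)]) o ∂P₀ = ∫ o, W o * (P₀[D | (MeasurableSpace.comap (Prod.snd : 𝒰 × 𝒱 → 𝒱) inferInstance)]) o ∂P₀ := by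
        refine integral_congr_ae ?_
        filter_upwards [condExp_mul_of_stronglyMeasurable_left hWsm hWD_int hD_int] with o ho
        simpa using ho
      have e6 : ∫ o, W o * (P₀[D | (MeasurableSpace.comap (Prod.snd : 𝒰 × 𝒱 → 𝒱) inferInstance)]) o ∂P₀ = 0 := by
        have : (fun o => W o * (P₀[D | (MeasurableSpace.comap (Prod.snd : 𝒰 × 𝒱 → 𝒱) inferInstance)]) o) =ᵐ[P₀] 0 := by
          filter_upwards [hD_cond] with o ho
          simp [ho]
        rw [integral_congr_ae this]
        simp
      rw [e4, e5, e6]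
    have hZDs_int : Integrable (fun o => Z o * (D o * s o)) P₀ := by
      refine Integrable.bdd_mul ?_ hZmeas.aestronglyMeasurable
        (c := Ch + |H₀|) (Filter.Eventually.of_forall fun o => by simpa [Real.norm_eq_abs] using hZbdd o)
      exact Integrable.bdd_mul hs_int hD_meas.aestronglyMeasurable
        (c := CD) (Filter.Eventually.of_forall fun o => by simpa [Real.norm_eq_abs] using hD_bdd o)
    have hZW_int : Integrable (fun o => W o * D o) P₀ := hWD_int
    have e7 : ∫ o, Z o * Y o ∂P₀
        = ∫ o, Z o * (D o * s o) ∂P₀ - ∫ o, W o * D o ∂P₀ := by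
      rw [← integral_sub hZDs_int hZW_int]
      refine integral_congr_ae (Filter.Eventually.of_forall fun o => ?_)
      simp only [hY, hW, hZ, Pi.mul_apply]
      ring
    rw [e1, e2, e3, e7, hzero, sub_zero]
  -- compute ∫ F' and match with ∫ Dstar * s
  have hφZ_int : Integrable (fun o => φ o.2 * Z o) P₀ := by
    have : Integrable (fun o => Z o * (P₀[Y | (MeasurableSpace.comap (Prod.snd : 𝒰 × 𝒱 → 𝒱) inferInstance)]) o) P₀ := by
      have hi : Integrable (P₀[Y | (MeasurableSpace.comap (Prod.snd : 𝒰 × 𝒱 → 𝒱) inferInstance)]) P₀ := integrable_condExp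
      exact Integrable.bdd_mul hi hZmeas.aestronglyMeasurable
        (c := Ch + |H₀|) (Filter.Eventually.of_forall fun o => by simpa [Real.norm_eq_abs] using hZbdd o)
    refine this.congr ?_
    filter_upwards [hφ_ver] with o ho
    rw [ho, mul_comm]
  have hA2_int : Integrable (fun o => Ψ (0, o.2) * (-c)) P₀ :=
    (intBdd _ B (hΨt 0) fun o => hΨ_bdd 0 o.2).mul_const (-c)
  have hA3_int : Integrable (fun o => Ψ (0, o.2) * (Z o * s o)) P₀ := by
    refine intBdd _ (B * ((Ch + |H₀|) * S)) ((hΨt 0).mul (hZmeas.mul hs_meas)) fun o => ?_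
    rw [abs_mul, abs_mul]
    exact mul_le_mul (hΨ_bdd 0 o.2)
      (mul_le_mul (hZbdd o) (hs_bdd o) (abs_nonneg _) (by linarith [abs_nonneg H₀]))
      (mul_nonneg (abs_nonneg _) (abs_nonneg _)) hB0
  have hZs_int : Integrable (fun o => Z o * s o) P₀ :=
    intBdd _ ((Ch + |H₀|) * S) (hZmeas.mul hs_meas) fun o => by
      rw [abs_mul]
      exact mul_le_mul (hZbdd o) (hs_bdd o) (abs_nonneg _) (by linarith [abs_nonneg H₀])
  have hZs_val : ∫ o, Z o * s o ∂P₀ = c := by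
    have e : (fun o => Z o * s o) = fun o => h o.2 * s o + (-H₀) * s o :=
      funext fun o => by simp only [hZ]; ring
    rw [e, integral_add hintc (hs_int.const_mul (-H₀)), integral_const_mul, hs_mean]
    ring
  have hDZs_int : Integrable (fun o => D o * s o * Z o) P₀ := by
    have : Integrable (fun o => Z o * (D o * s o)) P₀ := by
      refine Integrable.bdd_mul ?_ hZmeas.aestronglyMeasurable
        (c := Ch + |H₀|) (Filter.Eventually.of_forall fun o => by simpa [Real.norm_eq_abs] using hZbdd o)
      exact Integrable.bdd_mul hs_int hD_meas.aestronglyMeasurable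
        (c := CD) (Filter.Eventually.of_forall fun o => by simpa [Real.norm_eq_abs] using hD_bdd o)
    exact this.congr (Filter.Eventually.of_forall fun o => by ring_nf)
  have hF'val : ∫ o, F' o ∂P₀ = ∫ o, Dstar o * s o ∂P₀ := by
    have lhs : ∫ o, F' o ∂P₀
        = (∫ o, φ o.2 * Z o ∂P₀) + (B₀ * (-c) + ∫ o, Ψ (0, o.2) * (Z o * s o) ∂P₀) := by
      rw [hF'def]
      have e : (fun o => φ o.2 * (h o.2 - H₀) + Ψ (0, o.2) * (-c)
            + Ψ (0, o.2) * ((h o.2 - H₀) * s o))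
          = fun o => φ o.2 * Z o + (Ψ (0, o.2) * (-c) + Ψ (0, o.2) * (Z o * s o)) :=
        funext fun o => by simp only [hZ]; ring
      have hA23_int : Integrable (fun o => Ψ (0, o.2) * (-c) + Ψ (0, o.2) * (Z o * s o)) P₀ :=
        hA2_int.add hA3_int
      rw [e, integral_add hφZ_int hA23_int, integral_add hA2_int hA3_int, integral_mul_const]
    have rhs : ∫ o, Dstar o * s o ∂P₀
        = (∫ o, D o * s o * Z o ∂P₀)
          + ((-B₀) * (∫ o, Z o * s o ∂P₀) + ((∫ o, Ψ (0, o.2) * (Z o * s o) ∂P₀)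
            + (- Ω 0) * (∫ o, s o ∂P₀))) := by
      have e : (fun o => Dstar o * s o)
          = fun o => D o * s o * Z o + ((-B₀) * (Z o * s o)
            + (Ψ (0, o.2) * (Z o * s o) + (- Ω 0) * s o)) :=
        funext fun o => by simp only [hDstar o, hZ]; ring
      have i3 : Integrable (fun o => Ψ (0, o.2) * (Z o * s o) + (- Ω 0) * s o) P₀ :=
        hA3_int.add (hs_int.const_mul (- Ω 0))
      have i2 : Integrable (fun o => (-B₀) * (Z o * s o)
          + (Ψ (0, o.2) * (Z o * s o) + (- Ω 0) * s o)) P₀ :=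
        (hZs_int.const_mul (-B₀)).add i3
      rw [e, integral_add hDZs_int i2,
        integral_add (hZs_int.const_mul (-B₀)) i3,
        integral_add hA3_int (hs_int.const_mul (- Ω 0)),
        integral_const_mul, integral_const_mul]
    have keymatch : ∫ o, φ o.2 * Z o ∂P₀ = ∫ o, D o * s o * Z o ∂P₀ := by
      rw [key]
      exact integral_congr_ae (Filter.Eventually.of_forall fun o => by ring_nf)
    rw [lhs, rhs, keymatch, hZs_val, hs_mean]
    ring
  rw [← hF'val]
  exact main.congr_of_eventuallyEq hΩeq
end

section
/- Suppose Ψ : ℝ × 𝒱 → ℝ is measurable and there exist constants B, K with |Ψ(t,v)| ≤ B and |Ψ(t,v) − Ψ(0,v)| ≤ K·|t| for all (t,v); suppose D : 𝒪 → ℝ is bounded measurable with E_{P₀}[D | 𝒢] = 0 P₀-almost surely; and suppose there is a measurable φ : 𝒱 → ℝ such that φ∘V is a version of E_{P₀}[ D·(s − E_{P₀}[s | 𝒢]) | 𝒢 ] and, for (P₀∘V⁻¹)-almost every v, the map t ↦ Ψ(t,v) is differentiable at t = 0 with derivative φ(v). Define the marginalized parameter Ψ̃(t) := ∫ Ψ(t,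 V(o)) dP_t(o). Then t ↦ Ψ̃(t) is differentiable at t = 0 and Ψ̃′(0) = ∫ D̃(o)·s(o) dP₀(o), where D̃(o) := D(o) + Ψ(0, V(o)) − Ψ̃(0). Consequently, the function D* of Theorem 1 satisfies D*(o) = D̃(o)·( h(V(o)) − ∫ h(V) dP₀ ) − Ω(0), where Ω(0) := ∫ Ψ(0, V(o))·( h(V(o)) − ∫ h(V) dP₀ ) dP₀(o). -/
open MeasureTheory
open scoped ENNReal NNReal

set_option maxHeartbeats 1000000 in
/-- Paper's Proposition 2: for the marginalized parameter `Ψ̃(t) = ∫ Ψ(t, V) dP_t` along the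
tilted path `dP_t = (1 + t·s) dP₀`, `Ψ̃` is differentiable at `0` with derivative
`∫ D̃·s dP₀` where `D̃(o) = D(o) + Ψ(0, V(o)) − Ψ̃(0)`; consequently the efficient influence
function `D*` of Theorem 1 satisfies `D*(o) = D̃(o)·(h(V(o)) − ∫ h(V) dP₀) − Ω(0)`. -/
theorem stmt2
    {𝒰 𝒱 : Type*} [MeasurableSpace 𝒰] [MeasurableSpace 𝒱]
    (P₀ : Measure (𝒰 × 𝒱)) [IsProbabilityMeasure P₀]
    -- the direction `s`: bounded, measurable, mean zero
    (s : 𝒰 × 𝒱 → ℝ) (hs_meas : Measurable s) (S : ℝ) (hs_bdd : ∀ o, |s o| ≤ S)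
    (hs_mean : ∫ o, s o ∂P₀ = 0)
    -- the tilted path `P t`
    (P : ℝ → Measure (𝒰 × 𝒱))
    (hP : ∀ t, P t = P₀.withDensity (fun o => ENNReal.ofReal (1 + t * s o)))
    -- the function `h` in the dual class: bounded and measurable
    (h : 𝒱 → ℝ) (hh_meas : Measurable h) (Ch : ℝ) (hh_bdd : ∀ v, |h v| ≤ Ch)
    -- the function-valued parameter `Ψ (t, v) = Ψ_{t,v}`: measurable, bounded, Lipschitz in `t`
    (Ψ : ℝ × 𝒱 → ℝ) (hΨ_meas : Measurable Ψ)
    (B K : ℝ) (hΨ_bdd : ∀ t v, |Ψ (t, v)| ≤ B)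
    (hΨ_lip : ∀ t v, |Ψ (t, v) - Ψ (0, v)| ≤ K * |t|)
    -- the conditional influence function `D`: bounded, measurable, conditionally mean zero
    (D : 𝒰 × 𝒱 → ℝ) (hD_meas : Measurable D) (CD : ℝ) (hD_bdd : ∀ o, |D o| ≤ CD)
    (hD_cond : P₀[D | MeasurableSpace.comap (Prod.snd : 𝒰 × 𝒱 → 𝒱) inferInstance]
      =ᵐ[P₀] 0)
    -- `φ ∘ V` is a version of `E[D·(s − E[s|𝒢]) | 𝒢]`, and `t ↦ Ψ(t,v)` has derivative `φ v` at 0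
    (φ : 𝒱 → ℝ) (hφ_meas : Measurable φ)
    (hφ_ver : (fun o => φ o.2)
      =ᵐ[P₀] P₀[fun o => D o *
          (s o - (P₀[s | MeasurableSpace.comap (Prod.snd : 𝒰 × 𝒱 → 𝒱) inferInstance]) o)
        | MeasurableSpace.comap (Prod.snd : 𝒰 × 𝒱 → 𝒱) inferInstance])
    (hφ_deriv : ∀ᵐ v ∂(P₀.map Prod.snd), HasDerivAt (fun t => Ψ (t, v)) (φ v) 0)
    -- the marginalized parameter `Ψ̃`
    (Ψtilde : ℝ → ℝ) (hΨtilde : ∀ t, Ψtilde t = ∫ o, Ψ (t, o.2) ∂(P t))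
    -- its influence function `D̃`
    (Dtilde : 𝒰 × 𝒱 → ℝ) (hDtilde : ∀ o, Dtilde o = D o + Ψ (0, o.2) - Ψtilde 0)
    -- the functional `Ω` along the path and the influence function `D*` of Theorem 1
    (Ω : ℝ → ℝ)
    (hΩ : ∀ t, Ω t = ∫ o, Ψ (t, o.2) * (h o.2 - ∫ o', h o'.2 ∂(P t)) ∂(P t))
    (Dstar : 𝒰 × 𝒱 → ℝ)
    (hDstar : ∀ o, Dstar o =
      (D o - (∫ o', Ψ (0, o'.2) ∂P₀) + Ψ (0, o.2)) * (h o.2 - ∫ o', h o'.2 ∂P₀) - Ω 0) :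
    HasDerivAt Ψtilde (∫ o, Dtilde o * s o ∂P₀) 0
      ∧ ∀ o, Dstar o = Dtilde o * (h o.2 - ∫ o', h o'.2 ∂P₀) - Ω 0 := by
  classical
  haveI : Nonempty (𝒰 × 𝒱) := by
    by_contra hne
    rw [not_nonempty_iff] at hne
    have h1 : P₀ Set.univ = 1 := measure_univ
    rw [Set.univ_eq_empty_iff.mpr hne, measure_empty] at h1
    exact zero_ne_one h1
  have hS : 0 ≤ S := le_trans (abs_nonneg _) (hs_bdd Classical.ofNonempty)
  -- basic measurability / integrability facts
  have hbint : ∀ (f : 𝒰 × 𝒱 → ℝ), Measurable f → ∀ C : ℝ, (∀ o, |f o| ≤ C) →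
      Integrable f P₀ := by
    intro f hf C hC
    exact (integrable_const C).mono' hf.aestronglyMeasurable (ae_of_all _ hC)
  have hΨc_meas : ∀ t : ℝ, Measurable fun o : 𝒰 × 𝒱 => Ψ (t, o.2) :=
    fun t => hΨ_meas.comp (measurable_const.prodMk measurable_snd)
  have hΨc_int : ∀ t : ℝ, Integrable (fun o : 𝒰 × 𝒱 => Ψ (t, o.2)) P₀ :=
    fun t => hbint _ (hΨc_meas t) B (fun o => hΨ_bdd t o.2)
  have hΨs_int : ∀ t : ℝ, Integrable (fun o : 𝒰 × 𝒱 => Ψ (t, o.2) * s o) P₀ := by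
    intro t
    refine hbint _ ((hΨc_meas t).mul hs_meas) (B * S) (fun o => ?_)
    rw [abs_mul]
    exact mul_le_mul (hΨ_bdd t o.2) (hs_bdd o) (abs_nonneg _)
      (le_trans (abs_nonneg _) (hΨ_bdd t o.2))
  -- the tilted measure is a tilted integral for small t
  set ε : ℝ := (S + 1)⁻¹ with hε
  have hεpos : 0 < ε := inv_pos.mpr (by linarith)
  have hpos : ∀ t : ℝ, |t| < ε → ∀ o : 𝒰 × 𝒱, 0 ≤ 1 + t * s o := by
    intro t ht o
    have h1 : |t * s o| ≤ |t| * S := by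
      rw [abs_mul]
      exact mul_le_mul_of_nonneg_left (hs_bdd o) (abs_nonneg _)
    have h2 : |t| * S ≤ |t| * (S + 1) := by nlinarith [abs_nonneg t]
    have h3 : |t| * (S + 1) < 1 := by
      rw [hε] at ht
      calc |t| * (S + 1) < (S + 1)⁻¹ * (S + 1) := by nlinarith
        _ = 1 := by field_simp
    have := neg_abs_le (t * s o)
    nlinarith
  have hint_tilt : ∀ (t : ℝ), |t| < ε → ∀ (g : 𝒰 × 𝒱 → ℝ),
      ∫ o, g o ∂(P t) = ∫ o, (1 + t * s o) * g o ∂P₀ := by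
    intro t ht g
    rw [hP t]
    have hmeas : Measurable fun o : 𝒰 × 𝒱 => (1 + t * s o).toNNReal :=
      (measurable_const.add (hs_meas.const_mul t)).real_toNNReal
    have : (fun o : 𝒰 × 𝒱 => ENNReal.ofReal (1 + t * s o))
        = fun o => ((1 + t * s o).toNNReal : ℝ≥0∞) := rfl
    rw [this, integral_withDensity_eq_integral_smul hmeas]
    refine integral_congr_ae (ae_of_all _ fun o => ?_)
    simp [NNReal.smul_def, Real.coe_toNNReal _ (hpos t ht o)]
  -- pieces f and g
  set f : ℝ → ℝ := fun t => ∫ o, Ψ (t, o.2) ∂P₀ with hf_def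
  set g : ℝ → ℝ := fun t => ∫ o, Ψ (t, o.2) * s o ∂P₀ with hg_def
  have hsplit : ∀ t : ℝ, |t| < ε → Ψtilde t = f t + t * g t := by
    intro t ht
    rw [hΨtilde t, hint_tilt t ht]
    have : ∀ o : 𝒰 × 𝒱, (1 + t * s o) * Ψ (t, o.2)
        = Ψ (t, o.2) + t * (Ψ (t, o.2) * s o) := fun o => by ring
    simp_rw [this]
    rw [integral_add (hΨc_int t) ((hΨs_int t).const_mul t), integral_const_mul]
  -- derivative of f at 0
  have hφV_deriv : ∀ᵐ o ∂P₀, HasDerivAt (fun t => Ψ (t, o.2)) (φ o.2) 0 :=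
    ae_of_ae_map measurable_snd.aemeasurable hφ_deriv
  have hf_deriv : HasDerivAt f (∫ o, φ o.2 ∂P₀) 0 := by
    rw [hasDerivAt_iff_tendsto_slope]
    have hmain : Filter.Tendsto (fun t : ℝ => ∫ o, t⁻¹ * (Ψ (t, o.2) - Ψ (0, o.2)) ∂P₀)
        (nhdsWithin 0 {(0:ℝ)}ᶜ) (nhds (∫ o, φ o.2 ∂P₀)) := by
      refine tendsto_integral_filter_of_dominated_convergence (fun _ => K)
        (Filter.Eventually.of_forall fun t => ((((hΨc_meas t).sub (hΨc_meas 0)).const_mul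
          t⁻¹).aestronglyMeasurable)) ?_ (integrable_const K) ?_
      · refine Filter.eventually_iff_exists_mem.mpr ⟨{(0:ℝ)}ᶜ, self_mem_nhdsWithin, ?_⟩
        intro t ht
        refine ae_of_all _ fun o => ?_
        have ht0 : t ≠ 0 := ht
        have := hΨ_lip t o.2
        rw [Real.norm_eq_abs, abs_mul, abs_inv]
        rw [inv_mul_le_iff₀ (abs_pos.mpr ht0)]
        linarith [this, mul_comm K |t|]
      · filter_upwards [hφV_deriv] with o ho
        have := hasDerivAt_iff_tendsto_slope.mp ho
        refine this.congr' ?_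
        refine Filter.eventually_iff_exists_mem.mpr ⟨{(0:ℝ)}ᶜ, self_mem_nhdsWithin, ?_⟩
        intro t ht
        simp [slope_def_field, div_eq_inv_mul, sub_zero]
    refine hmain.congr' ?_
    refine Filter.eventually_iff_exists_mem.mpr ⟨{(0:ℝ)}ᶜ, self_mem_nhdsWithin, ?_⟩
    intro t ht
    have ht0 : (t : ℝ) ≠ 0 := ht
    simp only [slope_def_field, hf_def, sub_zero, div_eq_inv_mul]
    rw [integral_const_mul, integral_sub (hΨc_int t) (hΨc_int 0)]
  -- derivative of t ↦ t * g t at 0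
  have hg_cont : Filter.Tendsto g (nhds 0) (nhds (g 0)) := by
    have hbound : ∀ t : ℝ, |g t - g 0| ≤ K * S * |t| := by
      intro t
      rw [hg_def]
      rw [← integral_sub (hΨs_int t) (hΨs_int 0)]
      have : ∀ o : 𝒰 × 𝒱, Ψ (t, o.2) * s o - Ψ (0, o.2) * s o
          = (Ψ (t, o.2) - Ψ (0, o.2)) * s o := fun o => by ring
      simp_rw [this]
      calc |∫ o, (Ψ (t, o.2) - Ψ (0, o.2)) * s o ∂P₀|
          ≤ ∫ o, |Ψ (t, o.2) - Ψ (0, o.2)| * |s o| ∂P₀ := by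
            simpa [Real.norm_eq_abs, abs_mul] using
              norm_integral_le_integral_norm (μ := P₀)
                (fun o : 𝒰 × 𝒱 => (Ψ (t, o.2) - Ψ (0, o.2)) * s o)
        _ ≤ ∫ (_ : 𝒰 × 𝒱), K * |t| * S ∂P₀ := by
            refine integral_mono_of_nonneg
              (ae_of_all _ fun o => by
                simp only [Pi.zero_apply]; positivity)
              (integrable_const _) (ae_of_all _ fun o => ?_)
            show |Ψ (t, o.2) - Ψ (0, o.2)| * |s o| ≤ K * |t| * S
            have h1 := hΨ_lip t o.2
            have h2 := hs_bdd o
            have h3 : (0:ℝ) ≤ K * |t| := le_trans (abs_nonneg _) h1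
            exact mul_le_mul h1 h2 (abs_nonneg _) h3
        _ = K * |t| * S := by simp
        _ = K * S * |t| := by ring
    have habs : Filter.Tendsto (fun t : ℝ => K * S * |t|) (nhds 0) (nhds 0) := by
      have h1 : Filter.Tendsto (fun t : ℝ => |t|) (nhds 0) (nhds 0) := by
        simpa using continuous_abs.tendsto (0 : ℝ)
      simpa using h1.const_mul (K * S)
    have h0 : Filter.Tendsto (fun t : ℝ => g t - g 0) (nhds 0) (nhds 0) :=
      squeeze_zero_norm (fun t => by simpa [Real.norm_eq_abs] using hbound t) habs
    have := h0.add_const (g 0)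
    simpa using this
  have htg_deriv : HasDerivAt (fun t : ℝ => t * g t) (g 0) 0 := by
    rw [hasDerivAt_iff_tendsto_slope]
    refine (hg_cont.mono_left nhdsWithin_le_nhds).congr' ?_
    refine Filter.eventually_iff_exists_mem.mpr ⟨{(0:ℝ)}ᶜ, self_mem_nhdsWithin, ?_⟩
    intro t ht
    have ht0 : (t : ℝ) ≠ 0 := ht
    simp only [slope_def_field, zero_mul, sub_zero]
    rw [mul_comm, mul_div_assoc, div_self ht0, mul_one]
  -- combine
  have hsum : HasDerivAt Ψtilde (∫ o, φ o.2 ∂P₀ + g 0) 0 := by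
    refine (hf_deriv.add htg_deriv).congr_of_eventuallyEq ?_
    have hball : Metric.ball (0:ℝ) ε ∈ nhds (0:ℝ) := Metric.ball_mem_nhds _ hεpos
    filter_upwards [hball] with t ht
    rw [hsplit t (by simpa [Real.dist_eq] using ht)]; rfl
  -- conditional expectation computation:  ∫ φ∘V dP₀ = ∫ D s dP₀
  set 𝒢 : MeasurableSpace (𝒰 × 𝒱) :=
    MeasurableSpace.comap (Prod.snd : 𝒰 × 𝒱 → 𝒱) inferInstance with h𝒢def
  have h𝒢 : 𝒢 ≤ Prod.instMeasurableSpace := measurable_snd.comap_le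
  haveI : SigmaFinite (P₀.trim h𝒢) := by infer_instance
  set sc : 𝒰 × 𝒱 → ℝ := P₀[s | 𝒢] with hsc_def
  have hs_int : Integrable s P₀ := hbint _ hs_meas S hs_bdd
  have hD_int : Integrable D P₀ := hbint _ hD_meas CD hD_bdd
  have hsc_int : Integrable sc P₀ := integrable_condExp
  have hDs_int : Integrable (fun o => D o * s o) P₀ := by
    refine hbint _ (hD_meas.mul hs_meas) (CD * S) (fun o => ?_)
    rw [abs_mul]
    exact mul_le_mul (hD_bdd o) (hs_bdd o) (abs_nonneg _)
      (le_trans (abs_nonneg _) (hD_bdd o))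
  have hDsc_int : Integrable (fun o => D o * sc o) P₀ :=
    hsc_int.bdd_mul hD_meas.aestronglyMeasurable (ae_of_all _ fun o => hD_bdd o)
  have hDssc_int : Integrable (fun o => D o * (s o - sc o)) P₀ := by
    have : (fun o => D o * (s o - sc o)) = fun o => D o * s o - D o * sc o := by
      funext o; ring
    rw [this]
    exact hDs_int.sub hDsc_int
  have hDsc_zero : ∫ o, D o * sc o ∂P₀ = 0 := by
    have hscD_int : Integrable (sc * D) P₀ := by
      have hcomm : sc * D = fun o => D o * sc o := by funext o; exact mul_comm _ _
      rw [hcomm]; exact hDsc_int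
    have hmul : P₀[sc * D | 𝒢] =ᵐ[P₀] sc * P₀[D|𝒢] :=
      condExp_mul_of_stronglyMeasurable_left stronglyMeasurable_condExp hscD_int hD_int
    have hzero : P₀[sc * D | 𝒢] =ᵐ[P₀] 0 := by
      refine hmul.trans ?_
      filter_upwards [hD_cond] with o ho
      simp only [Pi.mul_apply, Pi.zero_apply] at *
      rw [ho, mul_zero]
    have h1 : ∫ o, (P₀[sc * D | 𝒢]) o ∂P₀ = ∫ o, (sc * D) o ∂P₀ := integral_condExp h𝒢
    have h2 : ∫ o, (P₀[sc * D | 𝒢]) o ∂P₀ = 0 := by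
      rw [integral_congr_ae hzero]; simp
    have h3 : ∫ o, (sc * D) o ∂P₀ = 0 := by rw [← h1, h2]
    rw [← h3]
    refine integral_congr_ae (ae_of_all _ fun o => ?_)
    simp [Pi.mul_apply, mul_comm]
  have hkey : ∫ o, φ o.2 ∂P₀ = ∫ o, D o * s o ∂P₀ := by
    rw [integral_congr_ae hφ_ver]
    rw [integral_condExp h𝒢]
    have : ∫ o, D o * (s o - sc o) ∂P₀ = ∫ o, D o * s o ∂P₀ - ∫ o, D o * sc o ∂P₀ := by
      rw [← integral_sub hDs_int hDsc_int]
      congr 1; funext o; ring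
    rw [this, hDsc_zero, sub_zero]
  -- value of Ψtilde at 0
  have hP0 : P 0 = P₀ := by
    rw [hP 0]
    simp only [zero_mul, add_zero, ENNReal.ofReal_one]
    exact MeasureTheory.withDensity_one
  have hΨt0 : Ψtilde 0 = ∫ o, Ψ (0, o.2) ∂P₀ := by rw [hΨtilde 0, hP0]
  -- rewrite the target derivative
  have htarget : ∫ o, Dtilde o * s o ∂P₀ = ∫ o, φ o.2 ∂P₀ + g 0 := by
    have hexp : ∀ o : 𝒰 × 𝒱, Dtilde o * s o
        = D o * s o + Ψ (0, o.2) * s o - Ψtilde 0 * s o := by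
      intro o; rw [hDtilde o]; ring
    have hfint : Integrable (fun o : 𝒰 × 𝒱 => D o * s o + Ψ (0, o.2) * s o) P₀ :=
      hDs_int.add (hΨs_int 0)
    simp_rw [hexp]
    rw [integral_sub hfint (hs_int.const_mul (Ψtilde 0)),
      integral_add hDs_int (hΨs_int 0), integral_const_mul, hs_mean, mul_zero, sub_zero,
      hkey]
  constructor
  · rw [htarget]; exact hsum
  · intro o
    rw [hDstar o, hDtilde o, hΨt0]
    ring
end

section
/- Let (Ω, ℱ, P) be a probability space carrying a bounded real random variable Y, a random variable T taking values in {0,1}, and a random variable X with values in a measurable space 𝒳. Let π : 𝒳 → ℝ be measurable with π(X) a version of E[T | σ(X)] and ε ≤ π(x) ≤ 1 − ε for some ε > 0 and all x, and let μ : {0,1} × 𝒳 → ℝ be bounded measurable with μ(T, X) a version of E[Y | σ(T, X)]. Define the AIPW pseudo-outcome ψ₀ := (2T − 1)/( T·π(X) + (1 − T)·(1 − π(X)) ) · ( Y − μ(T, X) ) + μ(1, X) − μ(0, X). Then E[ψ₀ | σ(X)] = μ(1, X) − μ(0, X) almost surely; in particular, E[ψ₀] = E[μ(1, X) − μ(0,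 X)]. -/
open MeasureTheory

/-- Conditional unbiasedness of the AIPW pseudo-outcome: with `π(X)` a version of
`E[T | σ(X)]` bounded in `[ε, 1−ε]` and `μ(T,X)` a version of `E[Y | σ(T,X)]`, the
pseudo-outcome `ψ₀ = (2T−1)/(Tπ(X) + (1−T)(1−π(X)))·(Y − μ(T,X)) + μ(1,X) − μ(0,X)`
satisfies `E[ψ₀ | σ(X)] = μ(1,X) − μ(0,X)` a.s.; in particular its mean is the ATE. -/
theorem stmt8 {Ω 𝒳 : Type*} {ℱ : MeasurableSpace Ω} [MeasurableSpace 𝒳]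
    (P : Measure Ω) [IsProbabilityMeasure P]
    (Y : Ω → ℝ) (hY_meas : Measurable Y) (CY : ℝ) (hY_bdd : ∀ ω, |Y ω| ≤ CY)
    (T : Ω → ℝ) (hT_meas : Measurable T) (hT_bin : ∀ ω, T ω = 0 ∨ T ω = 1)
    (X : Ω → 𝒳) (hX_meas : Measurable X)
    (π : 𝒳 → ℝ) (hπ_meas : Measurable π)
    (ε : ℝ) (hε : 0 < ε) (hπ_bdd : ∀ x, ε ≤ π x ∧ π x ≤ 1 - ε)
    (hπ_ver : (fun ω => π (X ω)) =ᵐ[P] P[T | MeasurableSpace.comap X inferInstance])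
    (μ : ℝ × 𝒳 → ℝ) (hμ_meas : Measurable μ) (Cμ : ℝ) (hμ_bdd : ∀ w, |μ w| ≤ Cμ)
    (hμ_ver : (fun ω => μ (T ω, X ω))
      =ᵐ[P] P[Y | MeasurableSpace.comap (fun ω => (T ω, X ω)) inferInstance])
    (ψ₀ : Ω → ℝ)
    (hψ₀ : ∀ ω, ψ₀ ω =
      (2 * T ω - 1) / (T ω * π (X ω) + (1 - T ω) * (1 - π (X ω))) * (Y ω - μ (T ω, X ω))
        + μ (1, X ω) - μ (0, X ω)) :
    (P[ψ₀ | MeasurableSpace.comap X inferInstance]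
      =ᵐ[P] fun ω => μ (1, X ω) - μ (0, X ω))
    ∧ ∫ ω, ψ₀ ω ∂P = ∫ ω, (μ (1, X ω) - μ (0, X ω)) ∂P := by
  classical
  set m₂ : MeasurableSpace Ω := MeasurableSpace.comap X inferInstance with hm₂def
  set m₁ : MeasurableSpace Ω := MeasurableSpace.comap (fun ω => (T ω, X ω)) inferInstance
    with hm₁def
  have hTX_meas : Measurable[ℱ] (fun ω => (T ω, X ω)) := hT_meas.prodMk hX_meas
  have hm₁ : m₁ ≤ ℱ := measurable_iff_comap_le.mp hTX_meas
  have hm₂ : m₂ ≤ ℱ := measurable_iff_comap_le.mp hX_meas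
  have hTX_m₁ : Measurable[m₁] (fun ω => (T ω, X ω)) := measurable_iff_comap_le.mpr le_rfl
  have hX_m₂ : Measurable[m₂] X := measurable_iff_comap_le.mpr le_rfl
  have hm₂₁ : m₂ ≤ m₁ := measurable_iff_comap_le.mp (measurable_snd.comp hTX_m₁)
  -- the weight function
  set w : Ω → ℝ := fun ω =>
    (2 * T ω - 1) / (T ω * π (X ω) + (1 - T ω) * (1 - π (X ω))) with hwdef
  have hF_meas : Measurable (fun p : ℝ × 𝒳 => (2 * p.1 - 1) / (p.1 * π p.2 +
      (1 - p.1) * (1 - π p.2))) := by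
    apply Measurable.div
    · exact (measurable_fst.const_mul 2).sub measurable_const
    · exact (measurable_fst.mul (hπ_meas.comp measurable_snd)).add
        (((measurable_const.sub measurable_fst)).mul
          (measurable_const.sub (hπ_meas.comp measurable_snd)))
  have hw_m₁ : Measurable[m₁] w := hF_meas.comp hTX_m₁
  have hμTX_m₁ : Measurable[m₁] (fun ω => μ (T ω, X ω)) := hμ_meas.comp hTX_m₁
  have hμTX_meas : Measurable[ℱ] (fun ω => μ (T ω, X ω)) := hμ_meas.comp hTX_meas
  -- bounds
  have hdenom : ∀ ω, ε ≤ T ω * π (X ω) + (1 - T ω) * (1 - π (X ω)) := by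
    intro ω
    rcases hT_bin ω with h | h <;> rw [h] <;> simp
    · exact (sub_le_sub_iff_left 1).mpr (hπ_bdd (X ω)).2 |>.trans_eq' (by ring) |>.trans_eq
        (by ring) |>.trans_eq rfl
    · exact (hπ_bdd (X ω)).1
  have hw_bdd : ∀ ω, |w ω| ≤ 1 / ε := by
    intro ω
    have hd := hdenom ω
    have hd0 : 0 < T ω * π (X ω) + (1 - T ω) * (1 - π (X ω)) := lt_of_lt_of_le hε hd
    have hnum : |2 * T ω - 1| = 1 := by rcases hT_bin ω with h | h <;> rw [h] <;> norm_num
    rw [hwdef]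
    simp only [abs_div, hnum, abs_of_pos hd0]
    exact div_le_div_of_nonneg_left one_pos.le hε hd
  -- residual and its integrability
  set r : Ω → ℝ := fun ω => Y ω - μ (T ω, X ω) with hrdef
  have hr_bdd : ∀ ω, |r ω| ≤ CY + Cμ := fun ω =>
    (abs_sub _ _).trans (add_le_add (hY_bdd ω) (hμ_bdd _))
  have hr_meas : Measurable[ℱ] r := hY_meas.sub hμTX_meas
  have hr_int : Integrable r P :=
    (integrable_const (CY + Cμ)).mono' hr_meas.aestronglyMeasurable (ae_of_all _ hr_bdd)
  have hg_meas : Measurable[ℱ] (w * r) :=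
    ((hF_meas.comp hTX_meas)).mul hr_meas
  have hg_int : Integrable (w * r) P := by
    refine (integrable_const ((1 / ε) * (CY + Cμ))).mono' hg_meas.aestronglyMeasurable
      (ae_of_all _ fun ω => ?_)
    simp only [Pi.mul_apply, Real.norm_eq_abs, abs_mul]
    exact mul_le_mul (hw_bdd ω) (hr_bdd ω) (abs_nonneg _)
      (by positivity)
  have hμTX_int : Integrable (fun ω => μ (T ω, X ω)) P :=
    (integrable_const Cμ).mono' hμTX_meas.aestronglyMeasurable (ae_of_all _ fun ω => hμ_bdd _)
  have hY_int : Integrable Y P :=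
    (integrable_const CY).mono' hY_meas.aestronglyMeasurable (ae_of_all _ hY_bdd)
  -- E[r | m₁] = 0 a.s.
  have hr_cond : P[r | m₁] =ᵐ[P] 0 := by
    have h1 : P[r | m₁] =ᵐ[P] P[Y | m₁] - P[(fun ω => μ (T ω, X ω)) | m₁] :=
      condExp_sub hY_int hμTX_int m₁
    have h2 : P[(fun ω => μ (T ω, X ω)) | m₁] = fun ω => μ (T ω, X ω) :=
      condExp_of_stronglyMeasurable hm₁ hμTX_m₁.stronglyMeasurable hμTX_int
    rw [h2] at h1
    filter_upwards [h1, hμ_ver] with ω h1ω h2ω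
    simp only [Pi.sub_apply, Pi.zero_apply] at h1ω ⊢
    rw [h1ω, ← h2ω]
    ring
  -- E[w * r | m₁] = 0 a.s.
  have hg_cond : P[w * r | m₁] =ᵐ[P] 0 := by
    have h := condExp_mul_of_stronglyMeasurable_left (μ := P) hw_m₁.stronglyMeasurable hg_int hr_int
    filter_upwards [h, hr_cond] with ω hω h0ω
    simp only [Pi.mul_apply, Pi.zero_apply] at *
    rw [hω, h0ω, mul_zero]
  -- tower: E[w * r | m₂] = 0 a.s.
  have hg_cond₂ : P[w * r | m₂] =ᵐ[P] 0 := by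
    have ht := condExp_condExp_of_le (μ := P) (f := w * r) hm₂₁ hm₁
    have h0 : P[P[w * r | m₁] | m₂] =ᵐ[P] P[(0 : Ω → ℝ) | m₂] := condExp_congr_ae hg_cond
    rw [condExp_zero] at h0
    exact ht.symm.trans h0
  -- the m₂-measurable part
  set h : Ω → ℝ := fun ω => μ (1, X ω) - μ (0, X ω) with hhdef
  have hh_m₂ : Measurable[m₂] h := by
    have : Measurable (fun x : 𝒳 => μ (1, x) - μ (0, x)) :=
      (hμ_meas.comp (measurable_const.prodMk measurable_id)).sub
        (hμ_meas.comp (measurable_const.prodMk measurable_id))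
    exact this.comp hX_m₂
  have hh_meas : Measurable[ℱ] h := hh_m₂.mono hm₂ le_rfl
  have hh_int : Integrable h P :=
    (integrable_const (Cμ + Cμ)).mono' hh_meas.aestronglyMeasurable
      (ae_of_all _ fun ω => (abs_sub _ _).trans (add_le_add (hμ_bdd _) (hμ_bdd _)))
  have hψ₀_eq : ψ₀ = w * r + h := by
    funext ω
    simp only [Pi.add_apply, Pi.mul_apply, hψ₀ ω, hwdef, hrdef, hhdef]
    ring
  have hcond : P[ψ₀ | m₂] =ᵐ[P] h := by
    rw [hψ₀_eq]
    have hadd := condExp_add (μ := P) (m := m₂) hg_int hh_int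
    have hh_cond : P[h | m₂] = h :=
      condExp_of_stronglyMeasurable hm₂ hh_m₂.stronglyMeasurable hh_int
    rw [hh_cond] at hadd
    filter_upwards [hadd, hg_cond₂] with ω h1ω h2ω
    simp only [Pi.add_apply, Pi.zero_apply] at *
    rw [h1ω, h2ω, zero_add]
  refine ⟨hcond, ?_⟩
  have hg_int0 : ∫ ω, (w * r) ω ∂P = 0 := by
    rw [← integral_condExp hm₁ (f := w * r)]
    rw [integral_congr_ae hg_cond]
    simp
  calc ∫ ω, ψ₀ ω ∂P = ∫ ω, ((w * r) ω + h ω) ∂P := by rw [hψ₀_eq]; rfl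
    _ = ∫ ω, (w * r) ω ∂P + ∫ ω, h ω ∂P := integral_add hg_int hh_int
    _ = ∫ ω, h ω ∂P := by rw [hg_int0, zero_add]
end

section
/- Let (Ω, ℱ, P) be a probability space carrying bounded real random variables X and Y and a random variable Z with values in a measurable space 𝒵. Let μ₀y, μ₀x : 𝒵 → ℝ be bounded measurable with μ₀y(Z) a version of E[Y | σ(Z)] and μ₀x(Z) a version of E[X | σ(Z)]. Let μny, μnx : 𝒵 → ℝ be bounded measurable, let h : 𝒵 → ℝ be bounded measurable with h̄₀ := E[h(Z)], and let h̄_n, c_n ∈ ℝ. Then E[ ( (Y − μny(Z))·(X − μnx(Z)) − c_n )·( h(Z) − h̄_n ) ] − E[ (Y − μ₀y(Z))·(X − μ₀x(Z))·( h(Z) − h̄₀ ) ] = E[ (μny(Z) − μ₀y(Z))·(μnx(Z) − μ₀x(Z))·( h(Z) − h̄₀ ) ] + (h̄₀ − h̄_n)·E[ (μny(Z) − μ₀y(Z))·(μnx(Z) − μ₀x(Z)) ] + (h̄₀ − h̄_n)·( E[ (Y − μ₀y(Z))·(X − μ₀x(Z)) ] − c_n ). -/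
open MeasureTheory

lemma stmt10_aux_bound {a b A B : ℝ} (ha : |a| ≤ A) (hb : |b| ≤ B) : |a * b| ≤ A * B := by
  rw [abs_mul]
  exact mul_le_mul ha hb (abs_nonneg _) (le_trans (abs_nonneg _) ha)

/-- If `μ ∘ Z` is a version of `E[W | σ(Z)]`, then `W - μ∘Z` is orthogonal to any bounded
measurable function of `Z`. -/
lemma stmt10_key {Ω 𝒵 : Type*} {ℱ : MeasurableSpace Ω} [MeasurableSpace 𝒵]
    (P : Measure Ω) [IsProbabilityMeasure P]
    (W : Ω → ℝ) (hW_meas : Measurable W) (CW : ℝ) (hW_bdd : ∀ ω, |W ω| ≤ CW)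
    (Z : Ω → 𝒵) (hZ_meas : Measurable Z)
    (μ : 𝒵 → ℝ) (hμ_meas : Measurable μ) (Cμ : ℝ) (hμ_bdd : ∀ z, |μ z| ≤ Cμ)
    (hver : (fun ω => μ (Z ω)) =ᵐ[P] P[W | MeasurableSpace.comap Z inferInstance])
    (f : 𝒵 → ℝ) (hf_meas : Measurable f) (Cf : ℝ) (hf_bdd : ∀ z, |f z| ≤ Cf) :
    ∫ ω, (W ω - μ (Z ω)) * f (Z ω) ∂P = 0 := by
  have hInt : ∀ (g : Ω → ℝ), Measurable g → ∀ C : ℝ, (∀ ω, |g ω| ≤ C) → Integrable g P := by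
    intro g hg C hC
    exact (integrable_const C).mono' hg.aestronglyMeasurable
      (Filter.Eventually.of_forall fun ω => by simpa using hC ω)
  let m : MeasurableSpace Ω := MeasurableSpace.comap Z inferInstance
  have hm : m ≤ ℱ := hZ_meas.comap_le
  have hZm : Measurable[m] Z := Measurable.of_comap_le le_rfl
  haveI : SigmaFinite (P.trim hm) := inferInstance
  have hg_int : Integrable (fun ω => W ω - μ (Z ω)) P :=
    hInt _ (hW_meas.sub (hμ_meas.comp hZ_meas)) (CW + Cμ)
      (fun ω => (abs_sub _ _).trans (add_le_add (hW_bdd ω) (hμ_bdd _)))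
  have hf_int : Integrable (fun ω => f (Z ω) * (W ω - μ (Z ω))) P :=
    hInt _ ((hf_meas.comp hZ_meas).mul (hW_meas.sub (hμ_meas.comp hZ_meas))) (Cf * (CW + Cμ))
      (fun ω => stmt10_aux_bound (hf_bdd _)
        ((abs_sub _ _).trans (add_le_add (hW_bdd ω) (hμ_bdd _))))
  have hfm : StronglyMeasurable[m] (fun ω => f (Z ω)) :=
    (hf_meas.comp hZm).stronglyMeasurable
  have hμZm : StronglyMeasurable[m] (fun ω => μ (Z ω)) :=
    (hμ_meas.comp hZm).stronglyMeasurable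
  have hμZ_int : Integrable (fun ω => μ (Z ω)) P :=
    hInt _ (hμ_meas.comp hZ_meas) Cμ (fun ω => hμ_bdd _)
  have hW_int : Integrable W P := hInt _ hW_meas CW hW_bdd
  -- E[W - μ∘Z | m] = 0 a.e.
  have hcond0 : P[fun ω => W ω - μ (Z ω) | m] =ᵐ[P] fun _ => (0 : ℝ) := by
    have h1 : P[fun ω => W ω - μ (Z ω) | m] =ᵐ[P] P[W|m] - P[fun ω => μ (Z ω)|m] :=
      condExp_sub hW_int hμZ_int m
    have h2 : P[fun ω => μ (Z ω)|m] = fun ω => μ (Z ω) :=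
      condExp_of_stronglyMeasurable hm hμZm hμZ_int
    filter_upwards [h1, hver] with ω h1ω hverω
    simp [h1ω, h2, Pi.sub_apply, ← hverω]
    exact sub_eq_zero.mpr hverω.symm
  have hpull : P[(fun ω => f (Z ω)) * (fun ω => W ω - μ (Z ω)) | m]
      =ᵐ[P] (fun ω => f (Z ω)) * P[fun ω => W ω - μ (Z ω) | m] :=
    condExp_mul_of_stronglyMeasurable_left hfm (by exact hf_int) hg_int
  have hzero : P[(fun ω => f (Z ω)) * (fun ω => W ω - μ (Z ω)) | m] =ᵐ[P] fun _ => (0:ℝ) := by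
    filter_upwards [hpull, hcond0] with ω h1 h2
    simp [h1, Pi.mul_apply, h2]
  have := integral_condExp (μ := P)
    (f := (fun ω => f (Z ω)) * (fun ω => W ω - μ (Z ω))) hm
  rw [integral_congr_ae hzero] at this
  simp only [integral_zero] at this
  calc ∫ ω, (W ω - μ (Z ω)) * f (Z ω) ∂P
      = ∫ ω, ((fun ω => f (Z ω)) * fun ω => W ω - μ (Z ω)) ω ∂P := by
        congr 1; funext ω; simp [Pi.mul_apply, mul_comm]
    _ = 0 := this.symm

/-- Exact second-order remainder identity for the conditional covariance functional
(Example 3): the remainder of the one-step estimator decomposes into a product of the two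
conditional-mean estimation errors integrated against the centered `h`, plus products of
estimation errors. -/
theorem stmt10 {Ω 𝒵 : Type*} {ℱ : MeasurableSpace Ω} [MeasurableSpace 𝒵]
    (P : Measure Ω) [IsProbabilityMeasure P]
    (X Y : Ω → ℝ) (hX_meas : Measurable X) (hY_meas : Measurable Y)
    (CX CY : ℝ) (hX_bdd : ∀ ω, |X ω| ≤ CX) (hY_bdd : ∀ ω, |Y ω| ≤ CY)
    (Z : Ω → 𝒵) (hZ_meas : Measurable Z)
    (μ₀y μ₀x : 𝒵 → ℝ) (hμ₀y_meas : Measurable μ₀y) (hμ₀x_meas : Measurable μ₀x)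
    (C₀y C₀x : ℝ) (hμ₀y_bdd : ∀ z, |μ₀y z| ≤ C₀y) (hμ₀x_bdd : ∀ z, |μ₀x z| ≤ C₀x)
    (hμ₀y_ver : (fun ω => μ₀y (Z ω)) =ᵐ[P] P[Y | MeasurableSpace.comap Z inferInstance])
    (hμ₀x_ver : (fun ω => μ₀x (Z ω)) =ᵐ[P] P[X | MeasurableSpace.comap Z inferInstance])
    (μny μnx : 𝒵 → ℝ) (hμny_meas : Measurable μny) (hμnx_meas : Measurable μnx)
    (Cny Cnx : ℝ) (hμny_bdd : ∀ z, |μny z| ≤ Cny) (hμnx_bdd : ∀ z, |μnx z| ≤ Cnx)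
    (h : 𝒵 → ℝ) (hh_meas : Measurable h) (Ch : ℝ) (hh_bdd : ∀ z, |h z| ≤ Ch)
    (hbarn cn : ℝ) :
    (∫ ω, ((Y ω - μny (Z ω)) * (X ω - μnx (Z ω)) - cn) * (h (Z ω) - hbarn) ∂P)
      - ∫ ω, (Y ω - μ₀y (Z ω)) * (X ω - μ₀x (Z ω)) * (h (Z ω) - ∫ ω', h (Z ω') ∂P) ∂P
      = (∫ ω, (μny (Z ω) - μ₀y (Z ω)) * (μnx (Z ω) - μ₀x (Z ω))
            * (h (Z ω) - ∫ ω', h (Z ω') ∂P) ∂P)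
        + ((∫ ω', h (Z ω') ∂P) - hbarn)
            * ∫ ω, (μny (Z ω) - μ₀y (Z ω)) * (μnx (Z ω) - μ₀x (Z ω)) ∂P
        + ((∫ ω', h (Z ω') ∂P) - hbarn)
            * ((∫ ω, (Y ω - μ₀y (Z ω)) * (X ω - μ₀x (Z ω)) ∂P) - cn) := by
  have hInt : ∀ (g : Ω → ℝ), Measurable g → ∀ C : ℝ, (∀ ω, |g ω| ≤ C) → Integrable g P := by
    intro g hg C hC
    exact (integrable_const C).mono' hg.aestronglyMeasurable
      (Filter.Eventually.of_forall fun ω => by simpa using hC ω)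
  set H0 : ℝ := ∫ ω', h (Z ω') ∂P with hH0
  -- abbreviations for the pieces
  set a : Ω → ℝ := fun ω => Y ω - μ₀y (Z ω) with ha
  set b : Ω → ℝ := fun ω => X ω - μ₀x (Z ω) with hb
  set dy : Ω → ℝ := fun ω => μny (Z ω) - μ₀y (Z ω) with hdy
  set dx : Ω → ℝ := fun ω => μnx (Z ω) - μ₀x (Z ω) with hdx
  have ha_meas : Measurable a := hY_meas.sub (hμ₀y_meas.comp hZ_meas)
  have hb_meas : Measurable b := hX_meas.sub (hμ₀x_meas.comp hZ_meas)
  have hdy_meas : Measurable dy := (hμny_meas.comp hZ_meas).sub (hμ₀y_meas.comp hZ_meas)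
  have hdx_meas : Measurable dx := (hμnx_meas.comp hZ_meas).sub (hμ₀x_meas.comp hZ_meas)
  have ha_bdd : ∀ ω, |a ω| ≤ CY + C₀y := fun ω =>
    (abs_sub _ _).trans (add_le_add (hY_bdd ω) (hμ₀y_bdd _))
  have hb_bdd : ∀ ω, |b ω| ≤ CX + C₀x := fun ω =>
    (abs_sub _ _).trans (add_le_add (hX_bdd ω) (hμ₀x_bdd _))
  have hdy_bdd : ∀ ω, |dy ω| ≤ Cny + C₀y := fun ω =>
    (abs_sub _ _).trans (add_le_add (hμny_bdd _) (hμ₀y_bdd _))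
  have hdx_bdd : ∀ ω, |dx ω| ≤ Cnx + C₀x := fun ω =>
    (abs_sub _ _).trans (add_le_add (hμnx_bdd _) (hμ₀x_bdd _))
  have hhc_meas : Measurable (fun ω => h (Z ω) - H0) := (hh_meas.comp hZ_meas).sub measurable_const
  have hhc_bdd : ∀ ω, |h (Z ω) - H0| ≤ Ch + |H0| := fun ω =>
    (abs_sub _ _).trans (add_le_add (hh_bdd _) le_rfl)
  -- the two vanishing cross terms
  have hkey_a : ∫ ω, (Y ω - μ₀y (Z ω)) * ((μnx (Z ω) - μ₀x (Z ω)) * (h (Z ω) - hbarn)) ∂P = 0 :=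
    stmt10_key P Y hY_meas CY hY_bdd Z hZ_meas μ₀y hμ₀y_meas C₀y hμ₀y_bdd hμ₀y_ver
      (fun z => (μnx z - μ₀x z) * (h z - hbarn))
      (((hμnx_meas.sub hμ₀x_meas)).mul (hh_meas.sub measurable_const))
      ((Cnx + C₀x) * (Ch + |hbarn|))
      (fun z => stmt10_aux_bound
        ((abs_sub _ _).trans (add_le_add (hμnx_bdd _) (hμ₀x_bdd _)))
        ((abs_sub _ _).trans (add_le_add (hh_bdd _) le_rfl)))
  have hkey_b : ∫ ω, (X ω - μ₀x (Z ω)) * ((μny (Z ω) - μ₀y (Z ω)) * (h (Z ω) - hbarn)) ∂P = 0 :=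
    stmt10_key P X hX_meas CX hX_bdd Z hZ_meas μ₀x hμ₀x_meas C₀x hμ₀x_bdd hμ₀x_ver
      (fun z => (μny z - μ₀y z) * (h z - hbarn))
      (((hμny_meas.sub hμ₀y_meas)).mul (hh_meas.sub measurable_const))
      ((Cny + C₀y) * (Ch + |hbarn|))
      (fun z => stmt10_aux_bound
        ((abs_sub _ _).trans (add_le_add (hμny_bdd _) (hμ₀y_bdd _)))
        ((abs_sub _ _).trans (add_le_add (hh_bdd _) le_rfl)))
  -- integrability of each term in the expansion
  have I1 : Integrable (fun ω => a ω * b ω * (h (Z ω) - H0)) P :=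
    hInt _ ((ha_meas.mul hb_meas).mul hhc_meas) ((CY + C₀y) * (CX + C₀x) * (Ch + |H0|))
      (fun ω => stmt10_aux_bound (stmt10_aux_bound (ha_bdd ω) (hb_bdd ω)) (hhc_bdd ω))
  have I2 : Integrable (fun ω => (H0 - hbarn) * (a ω * b ω)) P :=
    hInt _ (measurable_const.mul (ha_meas.mul hb_meas)) (|H0 - hbarn| * ((CY + C₀y) * (CX + C₀x)))
      (fun ω => stmt10_aux_bound le_rfl (stmt10_aux_bound (ha_bdd ω) (hb_bdd ω)))
  have I3 : Integrable (fun ω => dy ω * dx ω * (h (Z ω) - H0)) P :=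
    hInt _ ((hdy_meas.mul hdx_meas).mul hhc_meas) ((Cny + C₀y) * (Cnx + C₀x) * (Ch + |H0|))
      (fun ω => stmt10_aux_bound (stmt10_aux_bound (hdy_bdd ω) (hdx_bdd ω)) (hhc_bdd ω))
  have I4 : Integrable (fun ω => (H0 - hbarn) * (dy ω * dx ω)) P :=
    hInt _ (measurable_const.mul (hdy_meas.mul hdx_meas))
      (|H0 - hbarn| * ((Cny + C₀y) * (Cnx + C₀x)))
      (fun ω => stmt10_aux_bound le_rfl (stmt10_aux_bound (hdy_bdd ω) (hdx_bdd ω)))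
  have I5 : Integrable (fun ω => (-cn) * (h (Z ω) - hbarn)) P :=
    hInt _ (measurable_const.mul ((hh_meas.comp hZ_meas).sub measurable_const))
      (|(-cn)| * (Ch + |hbarn|))
      (fun ω => stmt10_aux_bound le_rfl ((abs_sub _ _).trans (add_le_add (hh_bdd _) le_rfl)))
  have I6 : Integrable (fun ω => -(a ω * (dx ω * (h (Z ω) - hbarn)))) P := by
    refine (hInt _ (ha_meas.mul (hdx_meas.mul ((hh_meas.comp hZ_meas).sub measurable_const)))
      ((CY + C₀y) * ((Cnx + C₀x) * (Ch + |hbarn|))) ?_).neg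
    intro ω
    exact stmt10_aux_bound (ha_bdd ω) (stmt10_aux_bound (hdx_bdd ω)
      ((abs_sub _ _).trans (add_le_add (hh_bdd _) le_rfl)))
  have I7 : Integrable (fun ω => -(b ω * (dy ω * (h (Z ω) - hbarn)))) P := by
    refine (hInt _ (hb_meas.mul (hdy_meas.mul ((hh_meas.comp hZ_meas).sub measurable_const)))
      ((CX + C₀x) * ((Cny + C₀y) * (Ch + |hbarn|))) ?_).neg
    intro ω
    exact stmt10_aux_bound (hb_bdd ω) (stmt10_aux_bound (hdy_bdd ω)
      ((abs_sub _ _).trans (add_le_add (hh_bdd _) le_rfl)))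
  -- pointwise expansion of the first integrand
  have expand : (fun ω => ((Y ω - μny (Z ω)) * (X ω - μnx (Z ω)) - cn) * (h (Z ω) - hbarn))
      = fun ω => a ω * b ω * (h (Z ω) - H0) + (H0 - hbarn) * (a ω * b ω)
        + dy ω * dx ω * (h (Z ω) - H0) + (H0 - hbarn) * (dy ω * dx ω)
        + (-cn) * (h (Z ω) - hbarn)
        + (-(a ω * (dx ω * (h (Z ω) - hbarn)))) + (-(b ω * (dy ω * (h (Z ω) - hbarn)))) := by
    funext ω
    simp only [ha, hb, hdy, hdx]
    ring
  rw [expand]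
  have J2 : Integrable (fun ω => a ω * b ω * (h (Z ω) - H0) + (H0 - hbarn) * (a ω * b ω)) P :=
    I1.add I2
  have J3 : Integrable (fun ω => a ω * b ω * (h (Z ω) - H0) + (H0 - hbarn) * (a ω * b ω)
      + dy ω * dx ω * (h (Z ω) - H0)) P := J2.add I3
  have J4 : Integrable (fun ω => a ω * b ω * (h (Z ω) - H0) + (H0 - hbarn) * (a ω * b ω)
      + dy ω * dx ω * (h (Z ω) - H0) + (H0 - hbarn) * (dy ω * dx ω)) P := J3.add I4
  have J5 : Integrable (fun ω => a ω * b ω * (h (Z ω) - H0) + (H0 - hbarn) * (a ω * b ω)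
      + dy ω * dx ω * (h (Z ω) - H0) + (H0 - hbarn) * (dy ω * dx ω)
      + (-cn) * (h (Z ω) - hbarn)) P := J4.add I5
  have J6 : Integrable (fun ω => a ω * b ω * (h (Z ω) - H0) + (H0 - hbarn) * (a ω * b ω)
      + dy ω * dx ω * (h (Z ω) - H0) + (H0 - hbarn) * (dy ω * dx ω)
      + (-cn) * (h (Z ω) - hbarn)
      + (-(a ω * (dx ω * (h (Z ω) - hbarn))))) P := J5.add I6
  rw [integral_add J6 I7, integral_add J5 I6, integral_add J4 I5, integral_add J3 I4,
      integral_add J2 I3, integral_add I1 I2]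
  have e6 : ∫ ω, -(a ω * (dx ω * (h (Z ω) - hbarn))) ∂P = 0 := by
    rw [integral_neg]; simp only [ha, hdx]; rw [hkey_a]; simp
  have e7 : ∫ ω, -(b ω * (dy ω * (h (Z ω) - hbarn))) ∂P = 0 := by
    rw [integral_neg]; simp only [hb, hdy]; rw [hkey_b]; simp
  have e2 : ∫ ω, (H0 - hbarn) * (a ω * b ω) ∂P = (H0 - hbarn) * ∫ ω, a ω * b ω ∂P :=
    integral_const_mul _ _
  have e4 : ∫ ω, (H0 - hbarn) * (dy ω * dx ω) ∂P = (H0 - hbarn) * ∫ ω, dy ω * dx ω ∂P :=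
    integral_const_mul _ _
  have e5 : ∫ ω, (-cn) * (h (Z ω) - hbarn) ∂P = (-cn) * (H0 - hbarn) := by
    rw [integral_const_mul]
    congr 1
    rw [integral_sub (hInt (fun ω => h (Z ω)) (hh_meas.comp hZ_meas) Ch (fun ω => hh_bdd _)) (integrable_const _)]
    simp [hH0]
  rw [e2, e4, e5, e6, e7]
  simp only [ha, hb, hdy, hdx]
  ring
end
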